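/- Let f(x) = Σ_{α∈T} c_α x^α be a polynomial with finite exponent set T ⊂ ℕ^n. Then f^SONC = (sig(f̃))^SAGE, and (sig(f̃))^SAGE ≤ min_{ω∈{−1,1}^n} (sig(f^ω))^SAGE ≤ f* = inf_{x∈ℝ^n} f(x). Moreover, if f is orthant-dominated, then (sig(f̃))^SAGE = min_{ω∈{−1,1}^n} (sig(f^ω))^SAGE. -/

import Mathlib

open Finset

noncomputable def dotp {n : ℕ} (a x : Fin n → ℝ) : ℝ := ∑ i, a i * x i

noncomputable def monom {n : ℕ} (α : Fin n → ℕ) (x : Fin n → ℝ) : ℝ := ∏ i, x i ^ α i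

/-- The AGE cone `C_AGE(A, β)`: nonnegative signomials supported on `A ∪ {β}` whose
coefficients on `A` are nonnegative (only the `β`-term may be negative). -/
def IsAGE {n : ℕ} (A : Finset (Fin n → ℝ)) (β : Fin n → ℝ) (f : (Fin n → ℝ) → ℝ) : Prop :=
  ∃ c : (Fin n → ℝ) → ℝ, (∀ α ∈ A, 0 ≤ c α) ∧
    (∀ x, f x = (∑ α ∈ A, c α * Real.exp (dotp α x)) + c β * Real.exp (dotp β x)) ∧
    (∀ x, 0 ≤ f x)

/-- The SAGE cone `C_SAGE(T) = Σ_{β ∈ T} C_AGE(T \ {β}, β)`. -/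
def IsSAGE {n : ℕ} (T : Finset (Fin n → ℝ)) (f : (Fin n → ℝ) → ℝ) : Prop :=
  ∃ g : (Fin n → ℝ) → ((Fin n → ℝ) → ℝ),
    (∀ β ∈ T, IsAGE (T.erase β) β (g β)) ∧ (∀ x, f x = ∑ β ∈ T, g β x)

/-- `f^SAGE = sup {l : f - l ∈ C_SAGE(T ∪ {0})}`, as an extended real number. -/
noncomputable def sageBound {n : ℕ} (T : Finset (Fin n → ℝ)) (f : (Fin n → ℝ) → ℝ) : EReal :=
  sSup ((fun l : ℝ => (l : EReal)) '' {l : ℝ | IsSAGE (insert 0 T) (fun x => f x - l)})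

/-- `f* = inf_{x ∈ ℝⁿ} f(x)`, as an extended real number. -/
noncomputable def infStar {n : ℕ} (f : (Fin n → ℝ) → ℝ) : EReal := ⨅ x, (f x : EReal)

/-- The AG cone `C_AG(A, β)` of nonnegative polynomials with nonnegative coefficients
on `A`, vanishing coefficients on non-even points of `A`, and possibly negative
coefficient on `β`. -/
def IsAG {n : ℕ} (A : Finset (Fin n → ℕ)) (β : Fin n → ℕ) (f : (Fin n → ℝ) → ℝ) : Prop :=
  ∃ c : (Fin n → ℕ) → ℝ, (∀ α ∈ A, 0 ≤ c α) ∧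
    (∀ γ ∈ A, (¬ ∀ i, Even (γ i)) → c γ = 0) ∧
    (∀ x, f x = (∑ α ∈ A, c α * monom α x) + c β * monom β x) ∧
    (∀ x, 0 ≤ f x)

/-- The SONC cone `C_SONC(T) = Σ_{β ∈ T} C_AG(T \ {β}, β)`. -/
def IsSONC {n : ℕ} (T : Finset (Fin n → ℕ)) (f : (Fin n → ℝ) → ℝ) : Prop :=
  ∃ g : (Fin n → ℕ) → ((Fin n → ℝ) → ℝ),
    (∀ β ∈ T, IsAG (T.erase β) β (g β)) ∧ (∀ x, f x = ∑ β ∈ T, g β x)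

/-- `f^SONC = sup {l : f - l ∈ C_SONC(T ∪ {0})}`, as an extended real number. -/
noncomputable def soncBound {n : ℕ} (T : Finset (Fin n → ℕ)) (f : (Fin n → ℝ) → ℝ) : EReal :=
  sSup ((fun l : ℝ => (l : EReal)) '' {l : ℝ | IsSONC (insert 0 T) (fun x => f x - l)})

/-- Action of a permutation on a real vector: `(σ·x) i = x (σ⁻¹ i)`. -/
def permAct {n : ℕ} (σ : Equiv.Perm (Fin n)) (x : Fin n → ℝ) : Fin n → ℝ := fun i => x (σ⁻¹ i)

/-- Action of a permutation on an exponent vector. -/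
def permActN {m : ℕ} (σ : Equiv.Perm (Fin m)) (x : Fin m → ℕ) : Fin m → ℕ := fun i => x (σ⁻¹ i)

/-- The orbit of a vector under the symmetric group, as a finite set. -/
noncomputable def orbitF {n : ℕ} (v : Fin n → ℝ) : Finset (Fin n → ℝ) :=
  Finset.univ.image (fun σ : Equiv.Perm (Fin n) => permAct σ v)

/-- The monomial mean `m_α^{(m)}(x) = (1/m!) Σ_{σ ∈ S_m} x^{σ(α)}`. -/
noncomputable def mmean {m : ℕ} (α : Fin m → ℕ) (x : Fin m → ℝ) : ℝ :=
  (1/(m.factorial : ℝ)) * ∑ σ : Equiv.Perm (Fin m), monom (permActN σ α) x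

namespace Stmt3Aux

variable {n : ℕ}

def emb {n : ℕ} (α : Fin n → ℕ) : Fin n → ℝ := fun i => (α i : ℝ)

lemma emb_inj : Function.Injective (emb (n := n)) := by
  intro a b h
  funext i
  exact Nat.cast_injective (congrFun h i)

lemma emb_zero : emb (0 : Fin n → ℕ) = 0 := by
  funext i; simp [emb]

lemma dotp_zero (y : Fin n → ℝ) : dotp 0 y = 0 := by simp [dotp]

lemma dotp_add (a y z : Fin n → ℝ) : dotp a (y + z) = dotp a y + dotp a z := by
  simp [dotp, mul_add, Finset.sum_add_distrib]

lemma exp_dotp_emb (α : Fin n → ℕ) (y : Fin n → ℝ) :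
    Real.exp (dotp (emb α) y) = ∏ i, Real.exp (y i) ^ α i := by
  rw [dotp, Real.exp_sum]
  exact Finset.prod_congr rfl fun i _ => Real.exp_nat_mul (y i) (α i)

lemma monom_exp (α : Fin n → ℕ) (y : Fin n → ℝ) :
    monom α (fun i => Real.exp (y i)) = Real.exp (dotp (emb α) y) := by
  rw [exp_dotp_emb, monom]

lemma monom_log (α : Fin n → ℕ) (z : Fin n → ℝ) (hz : ∀ i, 0 < z i) :
    monom α z = Real.exp (dotp (emb α) (fun i => Real.log (z i))) := by
  rw [exp_dotp_emb, monom]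
  exact Finset.prod_congr rfl fun i _ => by rw [Real.exp_log (hz i)]

lemma abs_monom (α : Fin n → ℕ) (x : Fin n → ℝ) :
    |monom α x| = monom α (fun i => |x i|) := by
  rw [monom, monom, Finset.abs_prod]
  exact Finset.prod_congr rfl fun i _ => by rw [abs_pow]

lemma monom_even (α : Fin n → ℕ) (hα : ∀ i, Even (α i)) (x : Fin n → ℝ) :
    monom α x = monom α (fun i => |x i|) := by
  rw [monom, monom]
  exact Finset.prod_congr rfl fun i _ => ((hα i).pow_abs (x i)).symm

lemma prod_sign_even (ε : Fin n → ℝ) (hε : ∀ i, ε i = 1 ∨ ε i = -1)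
    (α : Fin n → ℕ) (hα : ∀ i, Even (α i)) : ∏ i, ε i ^ α i = 1 := by
  apply Finset.prod_eq_one
  intro i _
  rcases hε i with h | h
  · rw [h, one_pow]
  · rw [h, (hα i).neg_one_pow]

lemma monom_sign_eval (ε : Fin n → ℝ) (α : Fin n → ℕ) (y : Fin n → ℝ) :
    monom α (fun i => ε i * Real.exp (y i))
      = (∏ i, ε i ^ α i) * Real.exp (dotp (emb α) y) := by
  rw [monom, exp_dotp_emb, ← Finset.prod_mul_distrib]
  exact Finset.prod_congr rfl fun i _ => mul_pow _ _ _

/-- The character `y ↦ exp ⟨a, y⟩` as a monoid hom on `Multiplicative (Fin n → ℝ)`. -/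
noncomputable def expChar (a : Fin n → ℝ) : Multiplicative (Fin n → ℝ) →* ℝ where
  toFun := fun y => Real.exp (dotp a (Multiplicative.toAdd y))
  map_one' := by
    show Real.exp (dotp a 0) = 1
    simp [dotp]
  map_mul' := by
    intro y z
    show Real.exp (dotp a (Multiplicative.toAdd y + Multiplicative.toAdd z)) = _
    rw [dotp_add, Real.exp_add]

lemma expChar_inj : Function.Injective (expChar (n := n)) := by
  intro a b h
  funext i
  have := congrFun (congrArg (fun f => (f : Multiplicative (Fin n → ℝ) →* ℝ).toFun) h)
    (Multiplicative.ofAdd (Pi.single i 1))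
  simp only [expChar] at this
  have h2 : dotp a (Pi.single i 1) = dotp b (Pi.single i 1) := Real.exp_injective this
  simpa [dotp, Pi.single_apply, mul_ite, Finset.sum_ite_eq'] using h2

/-- Linear independence of exponentials: coefficient extraction. -/
lemma ext_lemma (U : Finset (Fin n → ℝ)) (d : (Fin n → ℝ) → ℝ)
    (h : ∀ y, ∑ a ∈ U, d a * Real.exp (dotp a y) = 0) : ∀ a ∈ U, d a = 0 := by
  have li : LinearIndependent ℝ fun a : Fin n → ℝ => ⇑(expChar a) :=
    (linearIndependent_monoidHom (Multiplicative (Fin n → ℝ)) ℝ).comp _ expChar_inj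
  refine linearIndependent_iff'.mp li U d ?_
  funext y
  have := h (Multiplicative.toAdd y)
  simpa [expChar, Finset.sum_apply, Pi.smul_apply, smul_eq_mul] using this

lemma ext_lemmaN (Tn : Finset (Fin n → ℕ)) (u v : (Fin n → ℕ) → ℝ)
    (h : ∀ y, ∑ γ ∈ Tn, u γ * Real.exp (dotp (emb γ) y)
        = ∑ γ ∈ Tn, v γ * Real.exp (dotp (emb γ) y)) :
    ∀ γ ∈ Tn, u γ = v γ := by
  classical
  have key : ∀ a ∈ Tn.image emb,
      u (Function.invFun emb a) - v (Function.invFun emb a) = 0 := by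
    refine ext_lemma _ _ ?_
    intro y
    rw [Finset.sum_image (fun x _ y _ h => emb_inj h)]
    have : ∀ γ ∈ Tn,
        (u (Function.invFun emb (emb γ)) - v (Function.invFun emb (emb γ)))
          * Real.exp (dotp (emb γ) y)
        = u γ * Real.exp (dotp (emb γ) y) - v γ * Real.exp (dotp (emb γ) y) := by
      intro γ _
      rw [Function.leftInverse_invFun emb_inj γ, sub_mul]
    rw [Finset.sum_congr rfl this, Finset.sum_sub_distrib, h, sub_self]
  intro γ hγ
  have := key (emb γ) (Finset.mem_image_of_mem _ hγ)
  rw [Function.leftInverse_invFun emb_inj γ] at this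
  linarith



/-- positivity of off-diagonal entries -/
def Pos (Tn : Finset (Fin n → ℕ)) (C : (Fin n → ℕ) → (Fin n → ℕ) → ℝ) : Prop :=
  ∀ β ∈ Tn, ∀ α ∈ Tn, α ≠ β → 0 ≤ C β α

/-- each row gives a nonnegative signomial -/
def NonnegSig (Tn : Finset (Fin n → ℕ)) (C : (Fin n → ℕ) → (Fin n → ℕ) → ℝ) : Prop :=
  ∀ β ∈ Tn, ∀ y : Fin n → ℝ, 0 ≤ ∑ α ∈ Tn, C β α * Real.exp (dotp (emb α) y)

/-- column sums prescribed by w -/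
def ColSum (Tn : Finset (Fin n → ℕ)) (C : (Fin n → ℕ) → (Fin n → ℕ) → ℝ)
    (w : (Fin n → ℕ) → ℝ) : Prop :=
  ∀ γ ∈ Tn, ∑ β ∈ Tn, C β γ = w γ

/-- off-diagonal entries vanish on columns in N -/
def CleanOn (Tn N : Finset (Fin n → ℕ)) (C : (Fin n → ℕ) → (Fin n → ℕ) → ℝ) : Prop :=
  ∀ γ ∈ N, ∀ β ∈ Tn, β ≠ γ → C β γ = 0

lemma clean_one (Tn : Finset (Fin n → ℕ)) (w : (Fin n → ℕ) → ℝ)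
    (γ : Fin n → ℕ) (hγTn : γ ∈ Tn) (hwγ : w γ ≤ 0)
    (M : Finset (Fin n → ℕ)) (hγM : γ ∉ M)
    (B : Finset (Fin n → ℕ)) (hB : B ⊆ Tn.erase γ)
    (C : (Fin n → ℕ) → (Fin n → ℕ) → ℝ)
    (h1 : Pos Tn C) (h2 : NonnegSig Tn C) (h3 : ColSum Tn C w) (h4 : CleanOn Tn M C) :
    ∃ C', Pos Tn C' ∧ NonnegSig Tn C' ∧ ColSum Tn C' w ∧ CleanOn Tn M C' ∧
      ∀ β ∈ B, C' β γ = 0 := by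
  classical
  induction B using Finset.induction_on with
  | empty => exact ⟨C, h1, h2, h3, h4, fun β hβ => absurd hβ (Finset.notMem_empty β)⟩
  | @insert β B hβB ih =>
    obtain ⟨C', p1, p2, p3, p4, p5⟩ := ih (Finset.Subset.trans (Finset.subset_insert β B) hB)
    have hβmem : β ∈ Tn.erase γ := hB (Finset.mem_insert_self β B)
    have hβγ : β ≠ γ := (Finset.mem_erase.mp hβmem).1
    have hβTn : β ∈ Tn := (Finset.mem_erase.mp hβmem).2
    by_cases ht0 : C' β γ = 0
    · refine ⟨C', p1, p2, p3, p4, ?_⟩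
      intro β' hβ'
      rcases Finset.mem_insert.mp hβ' with rfl | hβ'
      · exact ht0
      · exact p5 β' hβ'
    · -- t := C' β γ > 0
      set t := C' β γ with ht
      have htpos : 0 < t := lt_of_le_of_ne (p1 β hβTn γ hγTn hβγ.symm) (Ne.symm ht0)
      -- C' γ γ ≤ w γ - t ≤ -t
      have hsum : ∑ β' ∈ Tn, C' β' γ = w γ := p3 γ hγTn
      have hsplit1 : ∑ β' ∈ Tn.erase β, C' β' γ + C' β γ = ∑ β' ∈ Tn, C' β' γ :=
        Finset.sum_erase_add Tn _ hβTn
      have hγmem' : γ ∈ Tn.erase β := Finset.mem_erase.mpr ⟨hβγ.symm, hγTn⟩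
      have hsplit2 : ∑ β' ∈ (Tn.erase β).erase γ, C' β' γ + C' γ γ
          = ∑ β' ∈ Tn.erase β, C' β' γ := Finset.sum_erase_add _ _ hγmem'
      have hrest : 0 ≤ ∑ β' ∈ (Tn.erase β).erase γ, C' β' γ := by
        apply Finset.sum_nonneg
        intro β' hβ'
        have hβ'γ : β' ≠ γ := (Finset.mem_erase.mp hβ').1
        have hβ'Tn : β' ∈ Tn := (Finset.mem_erase.mp (Finset.mem_erase.mp hβ').2).2
        exact p1 β' hβ'Tn γ hγTn hβ'γ.symm
      have hCγγ : C' γ γ ≤ -t := by nlinarith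
      have hCγγneg : 0 < -C' γ γ := by linarith
      set lam := t / (-C' γ γ) with hlam
      have hlam0 : 0 ≤ lam := le_of_lt (div_pos htpos hCγγneg)
      have hlam1 : lam ≤ 1 := (div_le_one hCγγneg).mpr (by linarith)
      have hlamCγγ : lam * C' γ γ = -t := by
        rw [hlam, div_mul_eq_mul_div, div_eq_iff (ne_of_gt hCγγneg)]; ring
      set C'' : (Fin n → ℕ) → (Fin n → ℕ) → ℝ := fun β' α =>
        if β' = β then C' β α + lam * C' γ α
        else if β' = γ then (1 - lam) * C' γ α else C' β' α with hC''
      have hC''β : ∀ α, C'' β α = C' β α + lam * C' γ α := by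
        intro α; simp [hC'']
      have hC''γ : ∀ α, C'' γ α = (1 - lam) * C' γ α := by
        intro α; simp [hC'', hβγ.symm]
      have hC''other : ∀ β', β' ≠ β → β' ≠ γ → ∀ α, C'' β' α = C' β' α := by
        intro β' hb hg α; simp [hC'', hb, hg]
      refine ⟨C'', ?_, ?_, ?_, ?_, ?_⟩
      · -- Pos
        intro β' hβ' α hα hαβ'
        by_cases hb : β' = β
        · subst hb
          rw [hC''β]
          by_cases hag : α = γ
          · subst hag
            rw [hlamCγγ]; simp [← ht]
          · have h1' := p1 β' hβ' α hα hαβ'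
            have h2' := p1 γ hγTn α hα hag
            nlinarith
        · by_cases hg : β' = γ
          · subst hg
            rw [hC''γ]
            have := p1 β' hβ' α hα hαβ'
            nlinarith
          · rw [hC''other β' hb hg]; exact p1 β' hβ' α hα hαβ'
      · -- NonnegSig
        intro β' hβ' y
        by_cases hb : β' = β
        · subst hb
          have e1 : ∑ α ∈ Tn, C'' β' α * Real.exp (dotp (emb α) y)
              = (∑ α ∈ Tn, C' β' α * Real.exp (dotp (emb α) y))
                + lam * ∑ α ∈ Tn, C' γ α * Real.exp (dotp (emb α) y) := by
            rw [Finset.mul_sum, ← Finset.sum_add_distrib]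
            refine Finset.sum_congr rfl fun α _ => ?_
            rw [hC''β]; ring
          rw [e1]
          have := p2 β' hβ' y
          have := p2 γ hγTn y
          nlinarith
        · by_cases hg : β' = γ
          · subst hg
            have e1 : ∑ α ∈ Tn, C'' β' α * Real.exp (dotp (emb α) y)
                = (1 - lam) * ∑ α ∈ Tn, C' β' α * Real.exp (dotp (emb α) y) := by
              rw [Finset.mul_sum]
              refine Finset.sum_congr rfl fun α _ => ?_
              rw [hC''γ]; ring
            rw [e1]
            have := p2 β' hβ' y
            nlinarith
          · have e1 : ∑ α ∈ Tn, C'' β' α * Real.exp (dotp (emb α) y)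
                = ∑ α ∈ Tn, C' β' α * Real.exp (dotp (emb α) y) := by
              refine Finset.sum_congr rfl fun α _ => ?_
              rw [hC''other β' hb hg]
            rw [e1]; exact p2 β' hβ' y
      · -- ColSum
        intro α hα
        have e1 : ∀ β' ∈ Tn, C'' β' α
            = C' β' α + ((if β' = β then lam * C' γ α else 0)
              + (if β' = γ then -(lam * C' γ α) else 0)) := by
          intro β' _
          by_cases hb : β' = β
          · subst hb; simp [hC''β, hβγ]
          · by_cases hg : β' = γ
            · subst hg; simp [hC''γ, hb]; ring
            · simp [hC''other β' hb hg, hb, hg]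
        rw [Finset.sum_congr rfl e1, Finset.sum_add_distrib, Finset.sum_add_distrib,
          Finset.sum_ite_eq' Tn β (fun _ => lam * C' γ α),
          Finset.sum_ite_eq' Tn γ (fun _ => -(lam * C' γ α))]
        simp [hβTn, hγTn]
        exact p3 α hα
      · -- CleanOn M
        intro γ' hγ' β' hβ'Tn hβ'γ'
        have hγγ' : γ ≠ γ' := fun h => hγM (h ▸ hγ')
        by_cases hb : β' = β
        · subst hb
          rw [hC''β, p4 γ' hγ' β' hβ'Tn hβ'γ', p4 γ' hγ' γ hγTn hγγ']
          ring
        · by_cases hg : β' = γ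
          · subst hg
            rw [hC''γ, p4 γ' hγ' β' hβ'Tn hγγ']
            ring
          · rw [hC''other β' hb hg]
            exact p4 γ' hγ' β' hβ'Tn hβ'γ'
      · -- cleaned column γ on insert β B
        intro β' hβ'
        rcases Finset.mem_insert.mp hβ' with rfl | hβ'B
        · rw [hC''β, hlamCγγ]; simp [← ht]
        · have hβ'β : β' ≠ β := fun h => hβB (h ▸ hβ'B)
          have hβ'γ : β' ≠ γ := (Finset.mem_erase.mp (hB (Finset.subset_insert β B hβ'B))).1
          rw [hC''other β' hβ'β hβ'γ]
          exact p5 β' hβ'B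

lemma cancel_free (Tn : Finset (Fin n → ℕ)) (w : (Fin n → ℕ) → ℝ)
    (N : Finset (Fin n → ℕ)) (hN : ∀ γ ∈ N, γ ∈ Tn ∧ w γ ≤ 0)
    (C : (Fin n → ℕ) → (Fin n → ℕ) → ℝ)
    (h1 : Pos Tn C) (h2 : NonnegSig Tn C) (h3 : ColSum Tn C w) :
    ∃ C', Pos Tn C' ∧ NonnegSig Tn C' ∧ ColSum Tn C' w ∧ CleanOn Tn N C' := by
  classical
  induction N using Finset.induction_on with
  | empty => exact ⟨C, h1, h2, h3, fun γ hγ => absurd hγ (Finset.notMem_empty γ)⟩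
  | @insert γ N hγN ih =>
    obtain ⟨C', p1, p2, p3, p4⟩ := ih fun γ' hγ' => hN γ' (Finset.mem_insert_of_mem hγ')
    have hγTn : γ ∈ Tn := (hN γ (Finset.mem_insert_self γ N)).1
    have hwγ : w γ ≤ 0 := (hN γ (Finset.mem_insert_self γ N)).2
    obtain ⟨C'', q1, q2, q3, q4, q5⟩ := clean_one Tn w γ hγTn hwγ N hγN
      (Tn.erase γ) (Finset.Subset.refl _) C' p1 p2 p3 p4
    refine ⟨C'', q1, q2, q3, ?_⟩
    intro γ' hγ' β hβTn hβγ'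
    rcases Finset.mem_insert.mp hγ' with rfl | hγ'N
    · exact q5 β (Finset.mem_erase.mpr ⟨hβγ', hβTn⟩)
    · exact q4 γ' hγ'N β hβTn hβγ'









/-- target coefficient vector of `fun x => (Σ_{α∈T} u_α x^α) - l` on `insert 0 T` -/
def tC (T : Finset (Fin n → ℕ)) (u : (Fin n → ℕ) → ℝ) (l : ℝ) (γ : Fin n → ℕ) : ℝ :=
  (if γ ∈ T then u γ else 0) + (if γ = 0 then -l else 0)

lemma S_eq (T : Finset (Fin n → ℕ)) :
    insert 0 (T.image emb) = (insert 0 T).image (emb (n := n)) := by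
  rw [Finset.image_insert, emb_zero]

lemma sum_tC (T : Finset (Fin n → ℕ)) (u : (Fin n → ℕ) → ℝ) (l : ℝ)
    (F : (Fin n → ℕ) → ℝ) (hF0 : F 0 = 1) :
    ∑ γ ∈ insert 0 T, tC T u l γ * F γ = (∑ α ∈ T, u α * F α) - l := by
  classical
  have : ∀ γ ∈ insert 0 T, tC T u l γ * F γ
      = (if γ ∈ T then u γ * F γ else 0) + (if γ = 0 then -l * F γ else 0) := by
    intro γ _
    unfold tC
    split_ifs <;> ring
  rw [Finset.sum_congr rfl this, Finset.sum_add_distrib]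
  have e1 : ∑ γ ∈ insert 0 T, (if γ ∈ T then u γ * F γ else 0) = ∑ α ∈ T, u α * F α := by
    rw [← Finset.sum_subset (Finset.subset_insert 0 T) (fun x _ hx => by simp [hx])]
    exact Finset.sum_congr rfl fun γ hγ => by simp [hγ]
  have e2 : ∑ γ ∈ insert 0 T, (if γ = 0 then -l * F γ else 0) = -l := by
    rw [Finset.sum_ite_eq' (insert 0 T) 0 (fun γ => -l * F γ)]
    simp [hF0]
  rw [e1, e2]; ring

lemma monom_zero_exp (x : Fin n → ℝ) : monom 0 x = 1 := by simp [monom]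

lemma tC_even (T : Finset (Fin n → ℕ)) (c ct : (Fin n → ℕ) → ℝ)
    (hct : ∀ α, ct α = if (∀ i, Even (α i)) then c α else -|c α|) (l : ℝ)
    (γ : Fin n → ℕ) (hγ : ∀ i, Even (γ i)) : tC T ct l γ = tC T c l γ := by
  unfold tC
  rw [hct γ, if_pos hγ]

lemma tC_odd (T : Finset (Fin n → ℕ)) (c ct : (Fin n → ℕ) → ℝ)
    (hct : ∀ α, ct α = if (∀ i, Even (α i)) then c α else -|c α|) (l : ℝ)
    (γ : Fin n → ℕ) (hγ : ¬ ∀ i, Even (γ i)) : tC T ct l γ = -|tC T c l γ| := by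
  have hγ0 : γ ≠ 0 := by
    intro h
    exact hγ (by intro i; rw [h]; exact Even.zero)
  unfold tC
  rw [hct γ, if_neg hγ, if_neg hγ0]
  by_cases h : γ ∈ T <;> simp [h]


lemma exists_sign (β : Fin n → ℕ) (hβ : ¬ ∀ i, Even (β i)) (r : ℝ) :
    ∃ ε : Fin n → ℝ, (∀ i, ε i = 1 ∨ ε i = -1) ∧ (∏ i, ε i ^ β i) * r = -|r| := by
  by_cases hr : 0 ≤ r
  · obtain ⟨i₀, hi₀⟩ := not_forall.mp hβ
    have hodd : Odd (β i₀) := Nat.not_even_iff_odd.mp hi₀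
    refine ⟨fun i => if i = i₀ then -1 else 1,
      fun i => by by_cases h : i = i₀ <;> simp [h], ?_⟩
    have hprod : (∏ i, (if i = i₀ then (-1:ℝ) else 1) ^ β i) = -1 := by
      rw [Finset.prod_eq_single i₀ (fun b _ hb => by simp [hb])
        (fun h => absurd (Finset.mem_univ i₀) h)]
      simp only [if_pos rfl]
      exact hodd.neg_one_pow
    rw [hprod, abs_of_nonneg hr]; ring
  · refine ⟨fun _ => 1, fun i => Or.inl rfl, ?_⟩
    have h1 : (∏ i : Fin n, (1:ℝ) ^ β i) = 1 := by simp
    rw [h1, one_mul, abs_of_neg (lt_of_not_ge hr), neg_neg]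

lemma dir1 (T : Finset (Fin n → ℕ)) (c ct : (Fin n → ℕ) → ℝ)
    (hct : ∀ α, ct α = if (∀ i, Even (α i)) then c α else -|c α|)
    (f : (Fin n → ℝ) → ℝ) (hf : ∀ x, f x = ∑ α ∈ T, c α * monom α x)
    (sigt : (Fin n → ℝ) → ℝ)
    (hsigt : ∀ y, sigt y = ∑ α ∈ T, ct α * Real.exp (dotp (emb α) y))
    (l : ℝ) (h : IsSONC (insert 0 T) (fun x => f x - l)) :
    IsSAGE (insert 0 (T.image emb)) (fun y => sigt y - l) := by
  classical
  obtain ⟨g, hg, hgsum⟩ := h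
  set Tn := insert 0 T with hTn
  have hcert : ∀ β, β ∈ Tn → ∃ cb : (Fin n → ℕ) → ℝ,
      (∀ α ∈ Tn.erase β, 0 ≤ cb α) ∧
      (∀ γ ∈ Tn.erase β, (¬ ∀ i, Even (γ i)) → cb γ = 0) ∧
      (∀ x, g β x = ∑ α ∈ Tn, cb α * monom α x) ∧ (∀ x, 0 ≤ g β x) := by
    intro β hβ
    obtain ⟨cb, hc1, hc2, hc3, hc4⟩ := hg β hβ
    refine ⟨cb, hc1, hc2, fun x => ?_, hc4⟩
    rw [hc3 x, ← Finset.sum_erase_add Tn (fun α => cb α * monom α x) hβ]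
  choose cb q1 q2 q3 q4 using hcert
  set Dm : (Fin n → ℕ) → (Fin n → ℕ) → ℝ :=
    fun β α => if h : β ∈ Tn then cb β h α else 0 with hDm
  have hDm1 : ∀ β (h : β ∈ Tn), ∀ α, Dm β α = cb β h α := by
    intro β h α; simp [hDm, h]
  have q1' : ∀ β, β ∈ Tn → ∀ α ∈ Tn, α ≠ β → 0 ≤ Dm β α := by
    intro β hβ α hα hne
    rw [hDm1 β hβ α]
    exact q1 β hβ α (Finset.mem_erase.mpr ⟨hne, hα⟩)
  have q2' : ∀ β, β ∈ Tn → ∀ γ ∈ Tn, γ ≠ β → (¬ ∀ i, Even (γ i)) → Dm β γ = 0 := by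
    intro β hβ γ hγ hne ho
    rw [hDm1 β hβ γ]
    exact q2 β hβ γ (Finset.mem_erase.mpr ⟨hne, hγ⟩) ho
  have q3' : ∀ β, β ∈ Tn → ∀ x, g β x = ∑ α ∈ Tn, Dm β α * monom α x := by
    intro β hβ x
    rw [q3 β hβ x]
    exact Finset.sum_congr rfl fun α _ => by rw [hDm1 β hβ α]
  have hF0 : ∀ y : Fin n → ℝ, Real.exp (dotp (emb (0 : Fin n → ℕ)) y) = 1 := by
    intro y; rw [emb_zero, dotp_zero, Real.exp_zero]
  have hcol : ∀ γ ∈ Tn, ∑ β ∈ Tn, Dm β γ = tC T c l γ := by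
    refine ext_lemmaN Tn (fun γ => ∑ β ∈ Tn, Dm β γ) (tC T c l) fun y => ?_
    calc ∑ γ ∈ Tn, (∑ β ∈ Tn, Dm β γ) * Real.exp (dotp (emb γ) y)
        = ∑ γ ∈ Tn, ∑ β ∈ Tn, Dm β γ * Real.exp (dotp (emb γ) y) :=
          Finset.sum_congr rfl fun γ _ => Finset.sum_mul _ _ _
      _ = ∑ β ∈ Tn, ∑ γ ∈ Tn, Dm β γ * Real.exp (dotp (emb γ) y) := Finset.sum_comm
      _ = ∑ β ∈ Tn, g β (fun i => Real.exp (y i)) := by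
          refine Finset.sum_congr rfl fun β hβ => ?_
          rw [q3' β hβ]
          exact Finset.sum_congr rfl fun γ _ => by rw [monom_exp]
      _ = f (fun i => Real.exp (y i)) - l := (hgsum _).symm
      _ = ∑ γ ∈ Tn, tC T c l γ * Real.exp (dotp (emb γ) y) := by
          rw [sum_tC T c l _ (hF0 y), hf]
          congr 1
          exact Finset.sum_congr rfl fun α _ => by rw [monom_exp]
  have hdiag : ∀ γ ∈ Tn, (¬ ∀ i, Even (γ i)) → Dm γ γ = tC T c l γ := by
    intro γ hγ hodd
    have h0 : ∑ β ∈ Tn.erase γ, Dm β γ = 0 := by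
      apply Finset.sum_eq_zero
      intro β hβ
      exact q2' β (Finset.mem_erase.mp hβ).2 γ hγ (Ne.symm (Finset.mem_erase.mp hβ).1) hodd
    have hsplit := Finset.sum_erase_add Tn (fun β => Dm β γ) hγ
    rw [h0, zero_add, hcol γ hγ] at hsplit
    exact hsplit
  set C' : (Fin n → ℕ) → (Fin n → ℕ) → ℝ := fun β α =>
    if α = β ∧ ¬(∀ i, Even (β i)) then -|Dm β β| else Dm β α with hC'
  have hC'diag_odd : ∀ β, (¬ ∀ i, Even (β i)) → C' β β = -|Dm β β| := by
    intro β h; simp [hC', h]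
  have hC'diag_even : ∀ β, (∀ i, Even (β i)) → C' β β = Dm β β := by
    intro β h; simp [hC', h]
  have hC'off : ∀ β α, α ≠ β → C' β α = Dm β α := by
    intro β α h; simp [hC', h]
  have hnonneg : ∀ β ∈ Tn, ∀ y, 0 ≤ ∑ α ∈ Tn, C' β α * Real.exp (dotp (emb α) y) := by
    intro β hβ y
    by_cases hev : ∀ i, Even (β i)
    · have e : ∑ α ∈ Tn, C' β α * Real.exp (dotp (emb α) y)
          = g β (fun i => Real.exp (y i)) := by
        rw [q3' β hβ]
        refine Finset.sum_congr rfl fun α hα => ?_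
        rw [monom_exp]
        by_cases hab : α = β
        · subst hab; rw [hC'diag_even α hev]
        · rw [hC'off β α hab]
      rw [e]; exact q4 β hβ _
    · obtain ⟨ε, hε, hεr⟩ := exists_sign β hev (Dm β β)
      have e : ∑ α ∈ Tn, C' β α * Real.exp (dotp (emb α) y)
          = g β (fun i => ε i * Real.exp (y i)) := by
        rw [q3' β hβ]
        refine Finset.sum_congr rfl fun α hα => ?_
        rw [monom_sign_eval ε α y]
        by_cases hab : α = β
        · subst hab
          rw [hC'diag_odd α hev, ← hεr]
          ring
        · rw [hC'off β α hab]
          by_cases haev : ∀ i, Even (α i)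
          · rw [prod_sign_even ε hε α haev]; ring
          · rw [q2' β hβ α hα hab haev]; ring
      rw [e]; exact q4 β hβ _
  have hcol' : ∀ γ ∈ Tn, ∑ β ∈ Tn, C' β γ = tC T ct l γ := by
    intro γ hγ
    by_cases hev : ∀ i, Even (γ i)
    · have e : ∀ β ∈ Tn, C' β γ = Dm β γ := by
        intro β hβ
        by_cases hb : γ = β
        · subst hb; exact hC'diag_even γ hev
        · exact hC'off β γ hb
      rw [Finset.sum_congr rfl e, hcol γ hγ, tC_even T c ct hct l γ hev]
    · have h0 : ∑ β ∈ Tn.erase γ, C' β γ = 0 := by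
        apply Finset.sum_eq_zero
        intro β hβ
        rw [hC'off β γ (Ne.symm (Finset.mem_erase.mp hβ).1)]
        exact q2' β (Finset.mem_erase.mp hβ).2 γ hγ (Ne.symm (Finset.mem_erase.mp hβ).1) hev
      have hsplit : ∑ β ∈ Tn.erase γ, C' β γ + C' γ γ = ∑ β ∈ Tn, C' β γ :=
        Finset.sum_erase_add Tn (fun β => C' β γ) hγ
      rw [h0, zero_add, hC'diag_odd γ hev, hdiag γ hγ hev] at hsplit
      rw [← hsplit, tC_odd T c ct hct l γ hev]
  have hinv : ∀ δ : Fin n → ℕ, Function.invFun emb (emb δ) = δ :=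
    fun δ => Function.leftInverse_invFun emb_inj δ
  rw [S_eq T, ← hTn]
  refine ⟨fun b y => ∑ α ∈ Tn, C' (Function.invFun emb b) α * Real.exp (dotp (emb α) y),
    ?_, ?_⟩
  · intro b hb
    obtain ⟨β, hβ, rfl⟩ := Finset.mem_image.mp hb
    have herase : (Tn.image emb).erase (emb β) = (Tn.erase β).image emb :=
      (Finset.image_erase emb_inj Tn β).symm
    refine ⟨fun a => C' β (Function.invFun emb a), ?_, ?_, ?_⟩
    · intro a ha
      rw [herase] at ha
      obtain ⟨α, hα, rfl⟩ := Finset.mem_image.mp ha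
      show 0 ≤ C' β (Function.invFun emb (emb α))
      rw [hinv α, hC'off β α (Finset.mem_erase.mp hα).1]
      exact q1' β hβ α (Finset.mem_erase.mp hα).2 (Finset.mem_erase.mp hα).1
    · intro y
      show ∑ α ∈ Tn, C' (Function.invFun emb (emb β)) α * Real.exp (dotp (emb α) y) = _
      rw [hinv β, herase, Finset.sum_image (fun x _ y _ h => emb_inj h)]
      simp only [hinv]
      exact (Finset.sum_erase_add Tn
        (fun α => C' β α * Real.exp (dotp (emb α) y)) hβ).symm
    · intro y
      show 0 ≤ ∑ α ∈ Tn, C' (Function.invFun emb (emb β)) α * Real.exp (dotp (emb α) y)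
      rw [hinv β]
      exact hnonneg β hβ y
  · intro y
    show sigt y - l
        = ∑ b ∈ Tn.image emb, ∑ α ∈ Tn,
            C' (Function.invFun emb b) α * Real.exp (dotp (emb α) y)
    rw [Finset.sum_image (fun x _ y _ h => emb_inj h)]
    calc sigt y - l
        = ∑ γ ∈ Tn, tC T ct l γ * Real.exp (dotp (emb γ) y) := by
          rw [sum_tC T ct l _ (hF0 y), hsigt]
      _ = ∑ γ ∈ Tn, (∑ β ∈ Tn, C' β γ) * Real.exp (dotp (emb γ) y) :=
          (Finset.sum_congr rfl fun γ hγ => by rw [hcol' γ hγ]).symm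
      _ = ∑ γ ∈ Tn, ∑ β ∈ Tn, C' β γ * Real.exp (dotp (emb γ) y) :=
          Finset.sum_congr rfl fun γ _ => Finset.sum_mul _ _ _
      _ = ∑ β ∈ Tn, ∑ γ ∈ Tn, C' β γ * Real.exp (dotp (emb γ) y) := Finset.sum_comm
      _ = ∑ β ∈ Tn, ∑ α ∈ Tn,
            C' (Function.invFun emb (emb β)) α * Real.exp (dotp (emb α) y) := by
          refine Finset.sum_congr rfl fun β _ => ?_
          rw [hinv β]

lemma sig_nonneg_closure (Tn : Finset (Fin n → ℕ)) (u : (Fin n → ℕ) → ℝ)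
    (h : ∀ y : Fin n → ℝ, 0 ≤ ∑ α ∈ Tn, u α * Real.exp (dotp (emb α) y))
    (z : Fin n → ℝ) (hz : ∀ i, 0 ≤ z i) : 0 ≤ ∑ α ∈ Tn, u α * monom α z := by
  have hpos : ∀ z' : Fin n → ℝ, (∀ i, 0 < z' i) → 0 ≤ ∑ α ∈ Tn, u α * monom α z' := by
    intro z' hz'
    have e : ∀ α ∈ Tn, u α * monom α z'
        = u α * Real.exp (dotp (emb α) (fun i => Real.log (z' i))) := by
      intro α _
      rw [monom_log α z' hz']
    rw [Finset.sum_congr rfl e]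
    exact h _
  have hcont : Continuous (fun z' : Fin n → ℝ => ∑ α ∈ Tn, u α * monom α z') := by
    apply continuous_finset_sum
    intro α _
    apply Continuous.mul continuous_const
    apply continuous_finset_prod
    intro i _
    exact (continuous_apply i).pow (α i)
  have h1 : Filter.Tendsto (fun t : ℝ => (fun i => z i + t))
      (nhdsWithin 0 (Set.Ioi 0)) (nhds z) := by
    have hG : Continuous (fun t : ℝ => (fun i => z i + t : Fin n → ℝ)) := by
      apply continuous_pi
      intro i
      exact continuous_const.add continuous_id
    have h2 := hG.tendsto 0
    have hz0 : (fun i => z i + (0:ℝ)) = z := by funext i; simp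
    rw [hz0] at h2
    exact h2.mono_left nhdsWithin_le_nhds
  have hT : Filter.Tendsto (fun t : ℝ => ∑ α ∈ Tn, u α * monom α (fun i => z i + t))
      (nhdsWithin 0 (Set.Ioi 0)) (nhds (∑ α ∈ Tn, u α * monom α z)) :=
    (hcont.tendsto z).comp h1
  refine ge_of_tendsto hT ?_
  refine Filter.eventually_of_mem self_mem_nhdsWithin ?_
  intro t ht
  refine hpos _ (fun i => ?_)
  have h3 : (0:ℝ) < t := Set.mem_Ioi.mp ht
  have h4 := hz i
  linarith

lemma dir2 (T : Finset (Fin n → ℕ)) (c ct : (Fin n → ℕ) → ℝ)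
    (hct : ∀ α, ct α = if (∀ i, Even (α i)) then c α else -|c α|)
    (f : (Fin n → ℝ) → ℝ) (hf : ∀ x, f x = ∑ α ∈ T, c α * monom α x)
    (sigt : (Fin n → ℝ) → ℝ)
    (hsigt : ∀ y, sigt y = ∑ α ∈ T, ct α * Real.exp (dotp (emb α) y))
    (l : ℝ) (h : IsSAGE (insert 0 (T.image emb)) (fun y => sigt y - l)) :
    IsSONC (insert 0 T) (fun x => f x - l) := by
  classical
  rw [S_eq T] at h
  obtain ⟨g, hg, hgsum⟩ := h
  set Tn := insert 0 T with hTn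
  have hinv : ∀ δ : Fin n → ℕ, Function.invFun emb (emb δ) = δ :=
    fun δ => Function.leftInverse_invFun emb_inj δ
  have hF0 : ∀ y : Fin n → ℝ, Real.exp (dotp (emb (0 : Fin n → ℕ)) y) = 1 := by
    intro y; rw [emb_zero, dotp_zero, Real.exp_zero]
  have hcert : ∀ β, β ∈ Tn → ∃ cb : (Fin n → ℕ) → ℝ,
      (∀ α ∈ Tn, α ≠ β → 0 ≤ cb α) ∧
      (∀ y, g (emb β) y = ∑ α ∈ Tn, cb α * Real.exp (dotp (emb α) y)) ∧
      (∀ y, 0 ≤ g (emb β) y) := by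
    intro β hβ
    have hβS : emb β ∈ Tn.image emb := Finset.mem_image_of_mem emb hβ
    obtain ⟨cc, hc1, hc2, hc3⟩ := hg (emb β) hβS
    refine ⟨fun α => cc (emb α), ?_, ?_, hc3⟩
    · intro α hα hne
      apply hc1
      rw [← Finset.image_erase emb_inj]
      exact Finset.mem_image_of_mem emb (Finset.mem_erase.mpr ⟨hne, hα⟩)
    · intro y
      rw [hc2 y,
        ← Finset.sum_erase_add Tn (fun α => cc (emb α) * Real.exp (dotp (emb α) y)) hβ]
      congr 1
      rw [← Finset.image_erase emb_inj, Finset.sum_image (fun x _ y _ h => emb_inj h)]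
  choose cb r1 r2 r3 using hcert
  set C : (Fin n → ℕ) → (Fin n → ℕ) → ℝ :=
    fun β α => if h : β ∈ Tn then cb β h α else 0 with hC
  have hC1 : ∀ β (h : β ∈ Tn), ∀ α, C β α = cb β h α := by
    intro β h α; simp [hC, h]
  have p1 : Pos Tn C := by
    intro β hβ α hα hne
    rw [hC1 β hβ]; exact r1 β hβ α hα hne
  have p2' : ∀ β (hβ : β ∈ Tn), ∀ y,
      g (emb β) y = ∑ α ∈ Tn, C β α * Real.exp (dotp (emb α) y) := by
    intro β hβ y
    rw [r2 β hβ y]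
    exact Finset.sum_congr rfl fun α _ => by rw [hC1 β hβ α]
  have p2 : NonnegSig Tn C := by
    intro β hβ y
    rw [← p2' β hβ y]
    exact r3 β hβ y
  have p3 : ColSum Tn C (tC T ct l) := by
    refine ext_lemmaN Tn _ (tC T ct l) fun y => ?_
    calc ∑ γ ∈ Tn, (∑ β ∈ Tn, C β γ) * Real.exp (dotp (emb γ) y)
        = ∑ γ ∈ Tn, ∑ β ∈ Tn, C β γ * Real.exp (dotp (emb γ) y) :=
          Finset.sum_congr rfl fun γ _ => Finset.sum_mul _ _ _
      _ = ∑ β ∈ Tn, ∑ γ ∈ Tn, C β γ * Real.exp (dotp (emb γ) y) := Finset.sum_comm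
      _ = ∑ β ∈ Tn, g (emb β) y :=
          (Finset.sum_congr rfl fun β hβ => (p2' β hβ y)).symm
      _ = ∑ b ∈ Tn.image emb, g b y :=
          (Finset.sum_image (f := fun b => g b y) (g := emb) (s := Tn)
            (fun x _ y _ h => emb_inj h)).symm
      _ = sigt y - l := (hgsum y).symm
      _ = ∑ γ ∈ Tn, tC T ct l γ * Real.exp (dotp (emb γ) y) := by
          rw [sum_tC T ct l _ (hF0 y), hsigt]
  set N := Tn.filter (fun γ => ¬ ∀ i, Even (γ i)) with hN
  have hNprop : ∀ γ ∈ N, γ ∈ Tn ∧ tC T ct l γ ≤ 0 := by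
    intro γ hγ
    have h1 := Finset.mem_filter.mp hγ
    refine ⟨h1.1, ?_⟩
    rw [tC_odd T c ct hct l γ h1.2]
    exact neg_nonpos.mpr (abs_nonneg _)
  obtain ⟨Ch, s1, s2, s3, s4⟩ := cancel_free Tn (tC T ct l) N hNprop C p1 p2 p3
  have hclean : ∀ γ ∈ Tn, (¬ ∀ i, Even (γ i)) → ∀ β ∈ Tn, β ≠ γ → Ch β γ = 0 := by
    intro γ hγ ho
    exact s4 γ (Finset.mem_filter.mpr ⟨hγ, ho⟩)
  have hdiag : ∀ γ ∈ Tn, (¬ ∀ i, Even (γ i)) → Ch γ γ = tC T ct l γ := by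
    intro γ hγ ho
    have h0 : ∑ β ∈ Tn.erase γ, Ch β γ = 0 := Finset.sum_eq_zero fun β hβ =>
      hclean γ hγ ho β (Finset.mem_erase.mp hβ).2 (Finset.mem_erase.mp hβ).1
    have hsplit : ∑ β ∈ Tn.erase γ, Ch β γ + Ch γ γ = ∑ β ∈ Tn, Ch β γ :=
      Finset.sum_erase_add Tn (fun β => Ch β γ) hγ
    rw [h0, zero_add, s3 γ hγ] at hsplit
    exact hsplit
  set D : (Fin n → ℕ) → (Fin n → ℕ) → ℝ := fun β α =>
    if α = β ∧ ¬(∀ i, Even (β i)) then tC T c l β else Ch β α with hD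
  have hDoff : ∀ β α, α ≠ β → D β α = Ch β α := by
    intro β α h; simp [hD, h]
  have hDdiag_even : ∀ β, (∀ i, Even (β i)) → D β β = Ch β β := by
    intro β h; simp [hD, h]
  have hDdiag_odd : ∀ β, (¬ ∀ i, Even (β i)) → D β β = tC T c l β := by
    intro β h; simp [hD, h]
  have key : ∀ β ∈ Tn, ∀ x : Fin n → ℝ, 0 ≤ ∑ α ∈ Tn, D β α * monom α x := by
    intro β hβ x
    have hA : 0 ≤ ∑ α ∈ Tn, Ch β α * monom α (fun i => |x i|) :=
      sig_nonneg_closure Tn (Ch β) (s2 β hβ) _ (fun i => abs_nonneg (x i))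
    by_cases hev : ∀ i, Even (β i)
    · have e : ∀ α ∈ Tn, D β α * monom α x = Ch β α * monom α (fun i => |x i|) := by
        intro α hα
        by_cases hab : α = β
        · subst hab
          rw [hDdiag_even α hev, monom_even α hev x]
        · rw [hDoff β α hab]
          by_cases haev : ∀ i, Even (α i)
          · rw [monom_even α haev x]
          · rw [hclean α hα haev β hβ (Ne.symm hab)]
            ring
      rw [Finset.sum_congr rfl e]
      exact hA
    · have hsplitD : ∑ α ∈ Tn.erase β, D β α * monom α x + D β β * monom β x
          = ∑ α ∈ Tn, D β α * monom α x :=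
        Finset.sum_erase_add Tn (fun α => D β α * monom α x) hβ
      have hsplitA : ∑ α ∈ Tn.erase β, Ch β α * monom α (fun i => |x i|)
            + Ch β β * monom β (fun i => |x i|)
          = ∑ α ∈ Tn, Ch β α * monom α (fun i => |x i|) :=
        Finset.sum_erase_add Tn (fun α => Ch β α * monom α (fun i => |x i|)) hβ
      have he : ∀ α ∈ Tn.erase β,
          D β α * monom α x = Ch β α * monom α (fun i => |x i|) := by
        intro α hα
        have hab : α ≠ β := (Finset.mem_erase.mp hα).1
        have hαTn : α ∈ Tn := (Finset.mem_erase.mp hα).2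
        rw [hDoff β α hab]
        by_cases haev : ∀ i, Even (α i)
        · rw [monom_even α haev x]
        · rw [hclean α hαTn haev β hβ (Ne.symm hab)]
          ring
      have hChββ : Ch β β = -|tC T c l β| := by
        rw [hdiag β hβ hev, tC_odd T c ct hct l β hev]
      have habs : |tC T c l β * monom β x| = |tC T c l β| * monom β (fun i => |x i|) := by
        rw [abs_mul, abs_monom]
      have hcomb : ∑ α ∈ Tn, D β α * monom α x
          = (∑ α ∈ Tn, Ch β α * monom α (fun i => |x i|))
            + (|tC T c l β| * monom β (fun i => |x i|) + tC T c l β * monom β x) := by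
        rw [← hsplitD, ← hsplitA, Finset.sum_congr rfl he, hDdiag_odd β hev, hChββ]
        ring
      rw [hcomb]
      have h5 := neg_abs_le (tC T c l β * monom β x)
      linarith
  refine ⟨fun β x => ∑ α ∈ Tn, D β α * monom α x, ?_, ?_⟩
  · intro β hβ
    refine ⟨D β, ?_, ?_, ?_, ?_⟩
    · intro α hα
      rw [hDoff β α (Finset.mem_erase.mp hα).1]
      exact s1 β hβ α (Finset.mem_erase.mp hα).2 (Finset.mem_erase.mp hα).1
    · intro γ hγ ho
      rw [hDoff β γ (Finset.mem_erase.mp hγ).1]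
      exact hclean γ (Finset.mem_erase.mp hγ).2 ho β hβ (Ne.symm (Finset.mem_erase.mp hγ).1)
    · intro x
      exact (Finset.sum_erase_add Tn (fun α => D β α * monom α x) hβ).symm
    · intro x
      exact key β hβ x
  · intro x
    show f x - l = ∑ β ∈ Tn, ∑ α ∈ Tn, D β α * monom α x
    have hcolD : ∀ γ ∈ Tn, ∑ β ∈ Tn, D β γ = tC T c l γ := by
      intro γ hγ
      by_cases hev : ∀ i, Even (γ i)
      · have e : ∀ β ∈ Tn, D β γ = Ch β γ := by
          intro β hβ
          by_cases hb : γ = β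
          · subst hb; exact hDdiag_even γ hev
          · exact hDoff β γ hb
        rw [Finset.sum_congr rfl e, s3 γ hγ, tC_even T c ct hct l γ hev]
      · have h0 : ∑ β ∈ Tn.erase γ, D β γ = 0 := Finset.sum_eq_zero fun β hβ => by
          rw [hDoff β γ (Ne.symm (Finset.mem_erase.mp hβ).1)]
          exact hclean γ hγ hev β (Finset.mem_erase.mp hβ).2 (Finset.mem_erase.mp hβ).1
        have hsplit : ∑ β ∈ Tn.erase γ, D β γ + D γ γ = ∑ β ∈ Tn, D β γ :=
          Finset.sum_erase_add Tn (fun β => D β γ) hγ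
        rw [h0, zero_add, hDdiag_odd γ hev] at hsplit
        exact hsplit.symm
    calc f x - l = ∑ γ ∈ Tn, tC T c l γ * monom γ x := by
          rw [sum_tC T c l (fun γ => monom γ x) (monom_zero_exp x), hf]
      _ = ∑ γ ∈ Tn, (∑ β ∈ Tn, D β γ) * monom γ x :=
          (Finset.sum_congr rfl fun γ hγ => by rw [hcolD γ hγ]).symm
      _ = ∑ γ ∈ Tn, ∑ β ∈ Tn, D β γ * monom γ x :=
          Finset.sum_congr rfl fun γ _ => Finset.sum_mul _ _ _
      _ = ∑ β ∈ Tn, ∑ γ ∈ Tn, D β γ * monom γ x := Finset.sum_comm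

end Stmt3Aux

/-- Relations between SONC and SAGE bounds: `f^SONC = (sig f̃)^SAGE ≤ min_ω (sig f^ω)^SAGE ≤ f*`,
with equality of the first inequality when `f` is orthant-dominated. -/
theorem stmt3 {n : ℕ} (T : Finset (Fin n → ℕ)) (c : (Fin n → ℕ) → ℝ)
    (f : (Fin n → ℝ) → ℝ) (hf : ∀ x, f x = ∑ α ∈ T, c α * monom α x)
    -- coefficients of f̃
    (ct : (Fin n → ℕ) → ℝ)
    (hct : ∀ α, ct α = if (∀ i, Even (α i)) then c α else -|c α|)
    -- the support of the associated signomials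
    (Tr : Finset (Fin n → ℝ)) (hTr : Tr = T.image (fun α i => (α i : ℝ)))
    -- the signomial sig(f̃)
    (sigt : (Fin n → ℝ) → ℝ)
    (hsigt : ∀ y, sigt y = ∑ α ∈ T, ct α * Real.exp (dotp (fun i => (α i : ℝ)) y))
    -- the signomials sig(f^ω)
    (sigf : (Fin n → ℝ) → (Fin n → ℝ) → ℝ)
    (hsigf : ∀ ω y, sigf ω y
      = ∑ α ∈ T, (c α * ∏ i, ω i ^ (α i)) * Real.exp (dotp (fun i => (α i : ℝ)) y)) :
    (soncBound T f = sageBound Tr sigt) ∧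
    (sageBound Tr sigt
      ≤ ⨅ ω : {ω : Fin n → ℝ // ∀ i, ω i = 1 ∨ ω i = -1}, sageBound Tr (sigf ω)) ∧
    ((⨅ ω : {ω : Fin n → ℝ // ∀ i, ω i = 1 ∨ ω i = -1}, sageBound Tr (sigf ω)) ≤ infStar f) ∧
    -- if f is orthant-dominated (f^ω = f̃ for some sign vector ω), the first bound is the min
    ((∃ ω : Fin n → ℝ, (∀ i, ω i = 1 ∨ ω i = -1) ∧ ∀ α ∈ T, c α * ∏ i, ω i ^ (α i) = ct α) →
      sageBound Tr sigt
        = ⨅ ω : {ω : Fin n → ℝ // ∀ i, ω i = 1 ∨ ω i = -1}, sageBound Tr (sigf ω)) := by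
  classical
  have hTrE : Tr = T.image Stmt3Aux.emb := hTr
  -- Part 1
  have hset : {l : ℝ | IsSONC (insert 0 T) (fun x => f x - l)}
      = {l : ℝ | IsSAGE (insert 0 Tr) (fun y => sigt y - l)} := by
    ext l
    simp only [Set.mem_setOf_eq]
    constructor
    · intro hl
      rw [hTrE]
      exact Stmt3Aux.dir1 T c ct hct f hf sigt hsigt l hl
    · intro hl
      rw [hTrE] at hl
      exact Stmt3Aux.dir2 T c ct hct f hf sigt hsigt l hl
  have part1 : soncBound T f = sageBound Tr sigt := by
    unfold soncBound sageBound
    rw [hset]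
  -- Part 2
  have part2 : ∀ ω : Fin n → ℝ, (∀ i, ω i = 1 ∨ ω i = -1) →
      sageBound Tr sigt ≤ sageBound Tr (sigf ω) := by
    intro ω hω
    unfold sageBound
    refine sSup_le_sSup (Set.image_mono ?_)
    intro l hl
    simp only [Set.mem_setOf_eq] at hl ⊢
    obtain ⟨g, hg, hgsum⟩ := hl
    set δ : (Fin n → ℕ) → ℝ := fun α => c α * ∏ i, ω i ^ α i - ct α with hδ
    have hδ0 : ∀ α, 0 ≤ δ α := by
      intro α
      rw [hδ]
      simp only []
      rw [hct α]
      by_cases hev : ∀ i, Even (α i)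
      · rw [if_pos hev, Stmt3Aux.prod_sign_even ω hω α hev]
        simp
      · rw [if_neg hev]
        have habs : |∏ i, ω i ^ α i| = 1 := by
          rw [Finset.abs_prod]
          refine Finset.prod_eq_one fun i _ => ?_
          rcases hω i with h | h <;> simp [h, abs_pow]
        have h6 : |c α * ∏ i, ω i ^ α i| = |c α| := by
          rw [abs_mul, habs, mul_one]
        have h7 := neg_abs_le (c α * ∏ i, ω i ^ α i)
        rw [h6] at h7
        linarith
    set Δ : (Fin n → ℝ) → ℝ :=
      fun a => ∑ α ∈ T.filter (fun α => Stmt3Aux.emb α = a), δ α with hΔ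
    have hΔ0 : ∀ a, 0 ≤ Δ a := fun a => Finset.sum_nonneg fun α _ => hδ0 α
    have hdiff : ∀ y, sigf ω y - sigt y
        = ∑ α ∈ T, δ α * Real.exp (dotp (Stmt3Aux.emb α) y) := by
      intro y
      rw [hsigf ω y, hsigt y, ← Finset.sum_sub_distrib]
      refine Finset.sum_congr rfl fun α _ => ?_
      show (c α * ∏ i, ω i ^ α i) * Real.exp (dotp (fun i => (α i : ℝ)) y)
          - ct α * Real.exp (dotp (fun i => (α i : ℝ)) y)
        = (c α * ∏ i, ω i ^ α i - ct α) * Real.exp (dotp (fun i => (α i : ℝ)) y)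
      ring
    have hmaps : ∀ α ∈ T, Stmt3Aux.emb α ∈ insert (0 : Fin n → ℝ) Tr := by
      intro α hα
      rw [hTrE]
      exact Finset.mem_insert_of_mem (Finset.mem_image_of_mem _ hα)
    have hfib : ∀ y, ∑ a ∈ insert (0 : Fin n → ℝ) Tr, Δ a * Real.exp (dotp a y)
        = ∑ α ∈ T, δ α * Real.exp (dotp (Stmt3Aux.emb α) y) := by
      intro y
      rw [← Finset.sum_fiberwise_of_maps_to hmaps
        (fun α => δ α * Real.exp (dotp (Stmt3Aux.emb α) y))]
      refine Finset.sum_congr rfl fun a _ => ?_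
      rw [hΔ]
      show (∑ α ∈ T.filter (fun α => Stmt3Aux.emb α = a), δ α) * Real.exp (dotp a y) = _
      rw [Finset.sum_mul]
      refine Finset.sum_congr rfl fun α hα => ?_
      rw [(Finset.mem_filter.mp hα).2]
    refine ⟨fun b y => g b y + (if b = 0 then sigf ω y - sigt y else 0), ?_, ?_⟩
    · intro b hb
      by_cases hb0 : b = 0
      · subst hb0
        obtain ⟨cc, hc1, hc2, hc3⟩ := hg 0 hb
        refine ⟨fun a => cc a + Δ a, ?_, fun y => ?_, fun y => ?_⟩
        · intro a ha
          show 0 ≤ cc a + Δ a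
          have := hΔ0 a
          have := hc1 a ha
          linarith
        · show g 0 y + (if (0 : Fin n → ℝ) = 0 then sigf ω y - sigt y else 0) = _
          rw [if_pos rfl, hc2 y]
          have e2 : sigf ω y - sigt y
              = ∑ a ∈ (insert (0 : Fin n → ℝ) Tr).erase 0, Δ a * Real.exp (dotp a y)
                + Δ 0 * Real.exp (dotp (0 : Fin n → ℝ) y) := by
            rw [hdiff y, ← hfib y, ← Finset.sum_erase_add (insert (0 : Fin n → ℝ) Tr)
              (fun a => Δ a * Real.exp (dotp a y)) (Finset.mem_insert_self 0 Tr)]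
          have e1 : ∑ a ∈ (insert (0 : Fin n → ℝ) Tr).erase 0,
                (cc a + Δ a) * Real.exp (dotp a y)
              = (∑ a ∈ (insert (0 : Fin n → ℝ) Tr).erase 0, cc a * Real.exp (dotp a y))
                + ∑ a ∈ (insert (0 : Fin n → ℝ) Tr).erase 0, Δ a * Real.exp (dotp a y) := by
            rw [← Finset.sum_add_distrib]
            exact Finset.sum_congr rfl fun a _ => by ring
          rw [e1, e2]
          ring
        · show 0 ≤ g 0 y + (if (0 : Fin n → ℝ) = 0 then sigf ω y - sigt y else 0)
          rw [if_pos rfl]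
          have h2 : 0 ≤ sigf ω y - sigt y := by
            rw [hdiff y]
            exact Finset.sum_nonneg fun α _ =>
              mul_nonneg (hδ0 α) (Real.exp_pos _).le
          have h3 := hc3 y
          linarith
      · obtain ⟨cc, hc1, hc2, hc3⟩ := hg b hb
        refine ⟨cc, hc1, fun y => ?_, fun y => ?_⟩
        · show g b y + (if b = 0 then sigf ω y - sigt y else 0) = _
          rw [if_neg hb0, add_zero]
          exact hc2 y
        · show 0 ≤ g b y + (if b = 0 then sigf ω y - sigt y else 0)
          rw [if_neg hb0, add_zero]
          exact hc3 y
    · intro y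
      show sigf ω y - l = ∑ b ∈ insert (0 : Fin n → ℝ) Tr,
          (g b y + (if b = 0 then sigf ω y - sigt y else 0))
      rw [Finset.sum_add_distrib, Finset.sum_ite_eq' (insert (0 : Fin n → ℝ) Tr) 0
        (fun _ => sigf ω y - sigt y)]
      have hgs : sigt y - l = ∑ b ∈ insert (0 : Fin n → ℝ) Tr, g b y := hgsum y
      rw [if_pos (Finset.mem_insert_self 0 Tr), ← hgs]
      ring
  -- Part 3
  have part3 : (⨅ ω : {ω : Fin n → ℝ // ∀ i, ω i = 1 ∨ ω i = -1},
      sageBound Tr (sigf ω)) ≤ infStar f := by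
    unfold infStar
    refine le_iInf fun x => ?_
    set ω : Fin n → ℝ := fun i => if 0 ≤ x i then 1 else -1 with hω
    have hωs : ∀ i, ω i = 1 ∨ ω i = -1 := by
      intro i
      by_cases h : 0 ≤ x i <;> simp [hω, h]
    refine le_trans (iInf_le _ ⟨ω, hωs⟩) ?_
    unfold sageBound
    refine sSup_le ?_
    rintro e ⟨l, hl, rfl⟩
    simp only [Set.mem_setOf_eq] at hl
    rw [EReal.coe_le_coe_iff]
    have hub : ∀ y, l ≤ sigf ω y := by
      intro y
      obtain ⟨g, hg, hgsum⟩ := hl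
      have hgs : sigf ω y - l = ∑ b ∈ insert (0 : Fin n → ℝ) Tr, g b y := hgsum y
      have hnn : 0 ≤ ∑ b ∈ insert (0 : Fin n → ℝ) Tr, g b y :=
        Finset.sum_nonneg fun b hb => (hg b hb).choose_spec.2.2 y
      linarith
    have heval : ∀ t : ℝ, 0 < t → l ≤ f (fun i => x i + t * ω i) := by
      intro t ht
      have h1 := hub (fun i => Real.log (|x i| + t))
      rw [hsigf ω (fun i => Real.log (|x i| + t))] at h1
      have h2 : ∀ α ∈ T, (c α * ∏ i, ω i ^ α i)
            * Real.exp (dotp (fun i => (α i : ℝ)) (fun i => Real.log (|x i| + t)))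
          = c α * monom α (fun i => x i + t * ω i) := by
        intro α _
        have h3 : Real.exp (dotp (fun i => (α i : ℝ)) (fun i => Real.log (|x i| + t)))
            = ∏ i, (|x i| + t) ^ α i := by
          rw [show (fun i => (α i : ℝ)) = Stmt3Aux.emb α from rfl, Stmt3Aux.exp_dotp_emb]
          refine Finset.prod_congr rfl fun i _ => ?_
          have : (0:ℝ) < |x i| + t := by
            have := abs_nonneg (x i); linarith
          rw [Real.exp_log this]
        have h4 : ∀ i, x i + t * ω i = ω i * (|x i| + t) := by
          intro i
          by_cases h : 0 ≤ x i
          · simp only [hω, if_pos h, abs_of_nonneg h]; ring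
          · simp only [hω, if_neg h, abs_of_neg (lt_of_not_ge h)]; ring
        have h5 : monom α (fun i => x i + t * ω i)
            = (∏ i, ω i ^ α i) * ∏ i, (|x i| + t) ^ α i := by
          unfold monom
          rw [← Finset.prod_mul_distrib]
          refine Finset.prod_congr rfl fun i _ => ?_
          show (x i + t * ω i) ^ α i = ω i ^ α i * (|x i| + t) ^ α i
          rw [h4 i, mul_pow]
        rw [h3, h5]
        ring
      rw [Finset.sum_congr rfl h2, ← hf (fun i => x i + t * ω i)] at h1
      exact h1
    have hcont : Continuous (fun t : ℝ => f (fun i => x i + t * ω i)) := by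
      have he : (fun t : ℝ => f (fun i => x i + t * ω i))
          = fun t => ∑ α ∈ T, c α * ∏ i, (x i + t * ω i) ^ α i := by
        funext t
        rw [hf (fun i => x i + t * ω i)]
        rfl
      rw [he]
      apply continuous_finset_sum
      intro α _
      apply Continuous.mul continuous_const
      apply continuous_finset_prod
      intro i _
      exact (continuous_const.add (continuous_id.mul continuous_const)).pow (α i)
    have hT : Filter.Tendsto (fun t : ℝ => f (fun i => x i + t * ω i))
        (nhdsWithin 0 (Set.Ioi 0)) (nhds (f x)) := by
      have h0 : f (fun i => x i + 0 * ω i) = f x := by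
        congr 1
        funext i
        ring
      have h9 := hcont.tendsto 0
      rw [h0] at h9
      exact h9.mono_left nhdsWithin_le_nhds
    exact ge_of_tendsto hT (Filter.eventually_of_mem self_mem_nhdsWithin
      fun t ht => heval t (Set.mem_Ioi.mp ht))
  refine ⟨part1, le_iInf fun ω => part2 ω.1 ω.2, part3, ?_⟩
  rintro ⟨ω₀, hω₀, hωc⟩
  refine le_antisymm (le_iInf fun ω => part2 ω.1 ω.2) ?_
  have hfe : sigf ω₀ = sigt := by
    funext y
    rw [hsigf ω₀ y, hsigt y]
    exact Finset.sum_congr rfl fun α hα => by rw [hωc α hα]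
  calc (⨅ ω : {ω : Fin n → ℝ // ∀ i, ω i = 1 ∨ ω i = -1}, sageBound Tr (sigf ω))
      ≤ sageBound Tr (sigf ω₀) := iInf_le _ (⟨ω₀, hω₀⟩ : {ω : Fin n → ℝ // ∀ i, ω i = 1 ∨ ω i = -1})
    _ = sageBound Tr sigt := by rw [hfe]
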